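/- If a linear subspace V ⊆ ℝ^d has dimension k ≤ d, then the number of points of {1,…,T}^d lying in V is at most T^k. -/

import Mathlib

open Set

lemma exists_good_coords {d k : ℕ} (V : Submodule ℝ (Fin d → ℝ))
    (hV : Module.finrank ℝ V = k) (hk : k ≤ d) :
    ∃ S : Finset (Fin d), S.card = k ∧ ∀ x ∈ V, (∀ i ∈ S, x i = 0) → x = 0 := by
  classical
  set e : Fin d → (Fin d → ℝ) := fun i => Pi.basisFun ℝ (Fin d) i with he
  let b := Module.finBasis ℝ V
  set v : Fin (Module.finrank ℝ V) → (Fin d → ℝ) := fun i => (b i : Fin d → ℝ) with hvdef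
  have hv : LinearIndependent ℝ v := b.linearIndependent.map' V.subtype V.ker_subtype
  set s : Set (Fin d → ℝ) := Set.range v with hsdef
  have hs : LinearIndepOn ℝ id s := (linearIndepOn_id_range_iff hv.injective).mpr hv
  have hspan_s : Submodule.span ℝ s = V := by
    have : Set.range v = V.subtype '' Set.range b := by
      rw [← Set.range_comp]; rfl
    rw [hsdef, this, Submodule.span_image, b.span_eq, Submodule.map_top, Submodule.range_subtype]
  set t : Set (Fin d → ℝ) := s ∪ Set.range e with htdef
  have hst : s ⊆ t := Set.subset_union_left
  have ht : ⊤ ≤ Submodule.span ℝ t := by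
    rw [← (Pi.basisFun ℝ (Fin d)).span_eq]
    exact Submodule.span_mono Set.subset_union_right
  set B : Set (Fin d → ℝ) := hs.extend hst with hBdef
  have hsB : s ⊆ B := hs.subset_extend hst
  have hBt : B ⊆ t := hs.extend_subset hst
  have hBli : LinearIndependent ℝ ((↑) : B → (Fin d → ℝ)) := hs.linearIndepOn_extend hst
  let Bb : Module.Basis B ℝ (Fin d → ℝ) := Module.Basis.extendLe hs hst ht
  haveI : Fintype B := FiniteDimensional.fintypeBasisIndex Bb
  have hBfin : B.Finite := B.toFinite
  have hBcard : B.ncard = d := by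
    have := Module.finrank_eq_card_basis Bb
    rw [Module.finrank_fin_fun] at this
    rw [Set.ncard_eq_toFinset_card', Set.toFinset_card, ← this]
  have hscard : s.ncard = k := by
    rw [hsdef, ← Set.image_univ, Set.ncard_image_of_injective _ hv.injective,
      Set.ncard_univ, Nat.card_eq_fintype_card, Fintype.card_fin, hV]
  have hdiffcard : (B \ s).ncard = d - k := by
    rw [Set.ncard_diff hsB (hBfin.subset hsB), hBcard, hscard]
  have heinj : Function.Injective e := (Pi.basisFun ℝ (Fin d)).injective
  set S' : Finset (Fin d) := Finset.univ.filter (fun i => e i ∈ B \ s) with hS'def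
  have himg : e '' ↑S' = B \ s := by
    ext x
    constructor
    · rintro ⟨i, hi, rfl⟩
      simpa [hS'def] using hi
    · intro hx
      have hxe : x ∈ Set.range e := by
        rcases hBt hx.1 with h | h
        · exact absurd h hx.2
        · exact h
      obtain ⟨i, rfl⟩ := hxe
      exact ⟨i, by simp [hS'def, hx.1, hx.2], rfl⟩
  have hS'card : S'.card = d - k := by
    have := congrArg Set.ncard himg
    rwa [Set.ncard_image_of_injective _ heinj, Set.ncard_coe_finset, hdiffcard] at this
  refine ⟨S'ᶜ, ?_, ?_⟩
  · rw [Finset.card_compl, hS'card, Fintype.card_fin, Nat.sub_sub_self hk]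
  · intro x hxV hxS
    have hx1 : x ∈ Submodule.span ℝ s := hspan_s ▸ hxV
    have hx2 : x ∈ Submodule.span ℝ (B \ s) := by
      have hrepr : x = ∑ i ∈ S', x i • e i := by
        funext j
        rw [Finset.sum_apply]
        have : ∀ i, (x i • e i) j = if i = j then x i else 0 := by
          intro i
          simp only [he, Pi.basisFun_apply, Pi.single_apply, smul_eq_mul]
          by_cases h : i = j <;> simp [h]
        simp only [this]
        rw [Finset.sum_ite_eq' S' j (fun i => x i)]
        by_cases hj : j ∈ S'
        · simp [hj]
        · simp [hj, hxS j (Finset.mem_compl.mpr hj)]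
      rw [hrepr]
      refine Submodule.sum_mem _ fun i hi => Submodule.smul_mem _ _ ?_
      exact Submodule.subset_span (himg ▸ ⟨i, hi, rfl⟩)
    have hdisj : Disjoint (Submodule.span ℝ s) (Submodule.span ℝ (B \ s)) := by
      have hd : Disjoint ((Subtype.val : B → _) ⁻¹' s) (Subtype.val ⁻¹' (B \ s)) :=
        (Set.disjoint_sdiff_right).preimage _
      have := hBli.disjoint_span_image hd
      rwa [Subtype.image_preimage_coe, Subtype.image_preimage_coe,
        Set.inter_eq_self_of_subset_right hsB,
        Set.inter_eq_self_of_subset_right Set.diff_subset] at this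
    exact Submodule.disjoint_def.mp hdisj x hx1 hx2

/-- `x` is a point of the grid `{1, …, T}^d`. -/
def InGrid (T : ℕ) {d : ℕ} (x : Fin d → ℝ) : Prop :=
  ∀ j, ∃ k : ℕ, 1 ≤ k ∧ k ≤ T ∧ x j = k

/-- A linear subspace of `ℝ^d` of dimension `k ≤ d` contains at most `T^k` points of the
grid `{1,…,T}^d`. -/
theorem grid_points_in_subspace_le {T d k : ℕ} (hT : 1 ≤ T)
    (V : Submodule ℝ (Fin d → ℝ)) (hV : Module.finrank ℝ V = k) (hk : k ≤ d) :
    Set.ncard {x : Fin d → ℝ | InGrid T x ∧ x ∈ V} ≤ T ^ k := by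
  classical
  obtain ⟨S, hScard, hSkey⟩ := exists_good_coords V hV hk
  set G : Finset ((i : S) → ℕ) := Fintype.piFinset (fun _ => Finset.Icc 1 T) with hG
  have hval : ∀ x : Fin d → ℝ, InGrid T x → ∀ j, x j = (⌊x j⌋₊ : ℝ) ∧ ⌊x j⌋₊ ∈ Finset.Icc 1 T := by
    intro x hx j
    obtain ⟨m, h1, h2, h3⟩ := hx j
    have hm : ⌊x j⌋₊ = m := by rw [h3]; exact Nat.floor_natCast m
    refine ⟨by rw [hm, h3], by rw [hm]; exact Finset.mem_Icc.mpr ⟨h1, h2⟩⟩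
  have hle : Set.ncard {x : Fin d → ℝ | InGrid T x ∧ x ∈ V} ≤ (↑G : Set ((i : S) → ℕ)).ncard := by
    apply Set.ncard_le_ncard_of_injOn (fun x (i : S) => ⌊x i.1⌋₊)
    · intro x hx
      simp only [Finset.mem_coe, hG, Fintype.mem_piFinset]
      exact fun i => (hval x hx.1 i.1).2
    · intro x hx y hy hxy
      have hxy' : ∀ i ∈ S, x i = y i := by
        intro i hi
        have h := congrFun hxy ⟨i, hi⟩
        rw [(hval x hx.1 i).1, (hval y hy.1 i).1]
        exact_mod_cast congrArg (Nat.cast : ℕ → ℝ) h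
      have hz : x - y = 0 :=
        hSkey (x - y) (V.sub_mem hx.2 hy.2) (fun i hi => by simp [hxy' i hi])
      exact sub_eq_zero.mp hz
  rw [Set.ncard_coe_finset] at hle
  refine hle.trans ?_
  rw [hG, Fintype.card_piFinset]
  simp only [Nat.card_Icc]
  rw [Finset.prod_const, Finset.card_univ, Fintype.card_coe, hScard, Nat.add_sub_cancel]
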